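/- Fix 0 < p < ε < 1/2 and a positive integer r. Let K be a p-core 0-core CRG with optimizer μ (full support, stationarity (M_K(p)μ)_u = g for all u, where g = g_K(p)). If g < (1−ε)p/r, then for every black vertex v of K: the weighted gray-degree satisfies d_G(v) > 1 − 1/r + ε/r, and μ(v) < p/r. -/
import Mathlib


open Finset

inductive EColor | white | black | gray
deriving DecidableEq

/-- The `p`-weight of an edge color: `p` for white, `1-p` for black, `0` for gray. -/
def wval (p : ℝ) : EColor → ℝ
  | .white => p
  | .black => 1 - p
  | .gray => 0

/-- The matrix `M_K(p)` of a CRG given by vertex colors `vb` (`true` = black)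
and edge colors `ec`. -/
def Mmat {V : Type*} [DecidableEq V] (vb : V → Bool) (ec : V → V → EColor) (p : ℝ)
    (x y : V) : ℝ :=
  if x = y then (if vb x then 1 - p else p) else wval p (ec x y)

/-- `μ` is a probability mass. -/
def IsProb {V : Type*} [Fintype V] (μ : V → ℝ) : Prop :=
  (∀ x, 0 ≤ μ x) ∧ ∑ x, μ x = 1

/-- The quadratic form `⟨μ, M_K(p) μ⟩`. -/
def QF {V : Type*} [Fintype V] [DecidableEq V] (vb : V → Bool) (ec : V → V → EColor)
    (p : ℝ) (μ : V → ℝ) : ℝ :=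
  ∑ x, ∑ y, μ x * Mmat vb ec p x y * μ y

/-- `g` is the minimum of the quadratic form over probability masses, i.e. `g = g_K(p)`. -/
def gIs {V : Type*} [Fintype V] [DecidableEq V] (vb : V → Bool) (ec : V → V → EColor)
    (p g : ℝ) : Prop :=
  IsLeast {t | ∃ μ : V → ℝ, IsProb μ ∧ t = QF vb ec p μ} g

/-- The weighted gray-degree `d_G(u) = ∑_{v : uv gray} μ(v)`. -/
def grayDeg {V : Type*} [Fintype V] [DecidableEq V] (ec : V → V → EColor) (μ : V → ℝ)
    (u : V) : ℝ :=
  ∑ v ∈ Finset.univ.filter (fun v => v ≠ u ∧ ec u v = EColor.gray), μ v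

/-- if `0 < p < ε < 1/2`, `K` is a `p`-core 0-core CRG with optimizer `μ` and
`g = g_K(p) < (1−ε)p/r`, then every black vertex `v` has `d_G(v) > 1 − 1/r + ε/r` and
`μ(v) < p/r`. -/
theorem stmt7 {V : Type*} [Fintype V] [DecidableEq V]
    (vb : V → Bool) (ec : V → V → EColor) (p ε g : ℝ) (r : ℕ) (hr : 1 ≤ r)
    (hp0 : 0 < p) (hpε : p < ε) (hε : ε < 1 / 2)
    (hsymm : ∀ a b, ec a b = ec b a)
    (hnb : ∀ x y, x ≠ y → ec x y ≠ EColor.black)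
    (hwe : ∀ x y, x ≠ y → ec x y = EColor.white → vb x = true ∧ vb y = true)
    (μ : V → ℝ) (hμ : IsProb μ) (hfull : ∀ x, 0 < μ x)
    (hg : gIs vb ec p g) (hμg : QF vb ec p μ = g)
    (hstat : ∀ u, ∑ v, Mmat vb ec p u v * μ v = g)
    (hlt : g < (1 - ε) * p / r) :
    ∀ v, vb v = true →
      1 - 1 / (r : ℝ) + ε / r < grayDeg ec μ v ∧ μ v < p / r := by
  intro v hv
  set W : ℝ := ∑ u ∈ Finset.univ.filter (fun u => u ≠ v ∧ ec v u = EColor.white), μ u with hW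
  set G : ℝ := grayDeg ec μ v with hG
  have hr0 : (0:ℝ) < (r:ℝ) := by exact_mod_cast Nat.lt_of_lt_of_le Nat.zero_lt_one hr
  -- stationarity at v:
  have h1 : g = (1 - p) * μ v + p * W := by
    have hs := hstat v
    rw [← hs]
    have hsplit : ∀ u, Mmat vb ec p v u * μ u =
        (if u = v then (1 - p) * μ u else 0) +
        (if u ≠ v ∧ ec v u = EColor.white then p * μ u else 0) := by
      intro u
      by_cases huv : u = v
      · subst huv
        simp [Mmat, hv]
      · have hvu : v ≠ u := fun h => huv h.symm
        have hM : Mmat vb ec p v u = wval p (ec v u) := by simp [Mmat, hvu]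
        cases hc : ec v u with
        | white => simp [hM, hc, wval, huv]
        | black => exact absurd hc (hnb v u hvu)
        | gray => simp [hM, hc, wval, huv]
    rw [Finset.sum_congr rfl (fun u _ => hsplit u), Finset.sum_add_distrib]
    rw [Finset.sum_ite_eq' Finset.univ v (fun u => (1 - p) * μ u)]
    rw [← Finset.sum_filter, ← Finset.mul_sum]
    simp [hW]
  -- partition of mass:
  have h2 : μ v + W + G = 1 := by
    have h := hμ.2
    have hsplit : ∀ u, μ u =
        (if u = v then μ u else 0) +
        (if u ≠ v ∧ ec v u = EColor.white then μ u else 0) +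
        (if u ≠ v ∧ ec v u = EColor.gray then μ u else 0) := by
      intro u
      by_cases huv : u = v
      · simp [huv]
      · have hvu : v ≠ u := fun h => huv h.symm
        cases hc : ec v u with
        | white => simp [huv, hc]
        | black => exact absurd hc (hnb v u hvu)
        | gray => simp [huv, hc]
    rw [← h, Finset.sum_congr rfl (fun u _ => hsplit u)]
    rw [Finset.sum_add_distrib, Finset.sum_add_distrib]
    rw [Finset.sum_ite_eq' Finset.univ v μ, ← Finset.sum_filter, ← Finset.sum_filter]
    simp [hW, hG, grayDeg]
  have hWnn : 0 ≤ W := Finset.sum_nonneg fun u _ => (hfull u).le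
  have hμv : 0 < μ v := hfull v
  have hglt : g * r < (1 - ε) * p := by
    have := (lt_div_iff₀ hr0).mp hlt
    linarith
  have e2 : p * (μ v + W + G) = p := by rw [h2]; ring
  have key : p * G = p - g + (1 - 2*p) * μ v := by linear_combination e2 + h1
  have h2p : (0:ℝ) < 1 - 2*p := by linarith
  have h1p : (0:ℝ) < 1 - p := by linarith
  constructor
  · -- G > 1 - 1/r + ε/r
    have hrG : (r:ℝ) - 1 + ε < G * (r:ℝ) := by
      nlinarith [key, hglt, mul_pos (mul_pos h2p hμv) hr0, mul_pos hp0 hr0]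
    have heq : 1 - 1/(r:ℝ) + ε/(r:ℝ) = ((r:ℝ) - 1 + ε)/(r:ℝ) := by
      field_simp
    rw [heq]
    exact (div_lt_iff₀ hr0).mpr hrG
  · -- μ v < p / r
    have hmg : (1-p) * μ v ≤ g := by nlinarith [mul_nonneg hp0.le hWnn]
    have hrmg : (r:ℝ) * ((1-p) * μ v) ≤ (r:ℝ) * g := mul_le_mul_of_nonneg_left hmg hr0.le
    have hμr : μ v * (r:ℝ) < p := by
      nlinarith [hrmg, hglt, mul_pos hp0 (sub_pos.mpr hpε), h1p, mul_pos hr0 hμv]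
    exact (lt_div_iff₀ hr0).mpr hμr
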